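/- Let G be a finite abelian p-group and let (A,B,C) be a triple of subgroups with A ⊓ B = B ⊓ C = C ⊓ A = 1 and A ⊔ B = B ⊔ C = C ⊔ A = G, with A, B, C pairwise distinct proper nontrivial subgroups. Then A ≅ B ≅ C, and G ≅ A × A. -/

import Mathlib

private lemma aux_equiv {G : Type*} [AddCommGroup G] (A B C : Submodule ℤ G)
    (hAB : IsCompl A B) (hCB : C ⊓ B = ⊥) (hsCB : C ⊔ B = ⊤) :
    Nonempty (C ≃ₗ[ℤ] A) := by
  let f := (A.projectionOnto B hAB).comp C.subtype
  have hinj : Function.Injective f := by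
    rw [← LinearMap.ker_eq_bot, LinearMap.ker_eq_bot']
    intro x hx
    have hxB : (x : G) ∈ B := by
      have := hx
      simpa [f, Submodule.projectionOnto_apply_eq_zero_iff] using this
    have : (x : G) ∈ C ⊓ B := ⟨x.2, hxB⟩
    rw [hCB] at this
    exact Subtype.ext (by simpa using this)
  have hsurj : Function.Surjective f := by
    intro a
    have ha : (a : G) ∈ C ⊔ B := by rw [hsCB]; trivial
    obtain ⟨c, hc, b, hb, hcb⟩ := Submodule.mem_sup.mp ha
    refine ⟨⟨c, hc⟩, ?_⟩
    have : c = (a : G) - b := by rw [← hcb]; abel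
    apply Subtype.ext
    simp only [f, LinearMap.comp_apply, Submodule.subtype_apply]
    rw [this, map_sub,
      Submodule.projectionOnto_apply_left hAB a,
      Submodule.projectionOnto_apply_of_mem_right hAB hb]
    simp
  exact ⟨LinearEquiv.ofBijective f ⟨hinj, hsurj⟩⟩

private def subEquiv {G : Type*} [AddCommGroup G] (A : AddSubgroup G) :
    (AddSubgroup.toIntSubmodule A) ≃+ A where
  toFun x := ⟨x.1, x.2⟩
  invFun x := ⟨x.1, x.2⟩
  left_inv _ := rfl
  right_inv _ := rfl
  map_add' _ _ := rfl

theorem stmt2 (G : Type*) [AddCommGroup G] [Finite G] (p : ℕ) (hp : p.Prime)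
    (hG : ∃ n : ℕ, Nat.card G = p ^ n) (A B C : AddSubgroup G)
    (hAB : A ≠ B) (hAC : A ≠ C) (hBC : B ≠ C)
    (hAbot : A ≠ ⊥) (hBbot : B ≠ ⊥) (hCbot : C ≠ ⊥)
    (hAtop : A ≠ ⊤) (hBtop : B ≠ ⊤) (hCtop : C ≠ ⊤)
    (hiAB : A ⊓ B = ⊥) (hiBC : B ⊓ C = ⊥) (hiCA : C ⊓ A = ⊥)
    (hsAB : A ⊔ B = ⊤) (hsBC : B ⊔ C = ⊤) (hsCA : C ⊔ A = ⊤) :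
    Nonempty (A ≃+ B) ∧ Nonempty (B ≃+ C) ∧ Nonempty (G ≃+ A × A) := by
  set A' := AddSubgroup.toIntSubmodule A with hA'
  set B' := AddSubgroup.toIntSubmodule B with hB'
  set C' := AddSubgroup.toIntSubmodule C with hC'
  have hmap : ∀ (X Y : AddSubgroup G), X ⊓ Y = ⊥ →
      (AddSubgroup.toIntSubmodule X) ⊓ (AddSubgroup.toIntSubmodule Y) = ⊥ := by
    intro X Y h
    rw [← AddSubgroup.toIntSubmodule.map_inf, h, AddSubgroup.toIntSubmodule.map_bot]
  have hmap' : ∀ (X Y : AddSubgroup G), X ⊔ Y = ⊤ →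
      (AddSubgroup.toIntSubmodule X) ⊔ (AddSubgroup.toIntSubmodule Y) = ⊤ := by
    intro X Y h
    rw [← OrderIso.map_sup (AddSubgroup.toIntSubmodule (M := G)) X Y, h, AddSubgroup.toIntSubmodule.map_top]
  have hABc : IsCompl A' B' := ⟨disjoint_iff.mpr (hmap A B hiAB), codisjoint_iff.mpr (hmap' A B hsAB)⟩
  have hBAc : IsCompl B' A' := hABc.symm
  -- C ≅ A (project along B)
  obtain ⟨eCA⟩ := aux_equiv A' B' C' hABc (hmap C B (by rw [inf_comm]; exact hiBC))
    (hmap' C B (by rw [sup_comm]; exact hsBC))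
  -- C ≅ B (project along A)
  obtain ⟨eCB⟩ := aux_equiv B' A' C' hBAc (hmap C A hiCA) (hmap' C A hsCA)
  have eA : C' ≃+ A := eCA.toAddEquiv.trans (subEquiv A)
  have eB : C' ≃+ B := eCB.toAddEquiv.trans (subEquiv B)
  have eAB : A ≃+ B := eA.symm.trans eB
  refine ⟨⟨eAB⟩, ⟨eB.symm.trans (subEquiv C)⟩, ?_⟩
  exact ⟨((Submodule.prodEquivOfIsCompl A' B' hABc).symm.toAddEquiv).trans
    (AddEquiv.prodCongr (subEquiv A) ((subEquiv B).trans eAB.symm))⟩
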